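/- Let A be a complex m×n matrix and B a complex r×s matrix with |A|_∞ ≤ 1 and |B|_∞ ≤ 1. Then for every i = 1, ..., min(m,n,r,s): |σᵢ(A)/√(mn) − σᵢ(B)/√(rs)| ≤ 6·δ_⊟(A,B)^{1/2}. -/

import Mathlib

open Matrix Finset

/-- The cut-norm of a complex `M × N` matrix. -/
noncomputable def cutNorm {M N : ℕ} (A : Matrix (Fin M) (Fin N) ℂ) : ℝ :=
  Finset.univ.sup' Finset.univ_nonempty
    (fun p : Finset (Fin M) × Finset (Fin N) =>
      ‖∑ i ∈ p.1, ∑ j ∈ p.2, A i j‖ / (M * N))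

/-- `|A|_∞ = max_{i,j} |a_{ij}|`. -/
noncomputable def supAbs {M N : ℕ} (A : Matrix (Fin M) (Fin N) ℂ) : ℝ :=
  ⨆ i, ⨆ j, ‖A i j‖

/-- `f` rearranged in decreasing order. -/
noncomputable def sortDesc {N : ℕ} (f : Fin N → ℝ) : Fin N → ℝ :=
  fun i => f (Tuple.sort f i.rev)

/-- The singular values `σ₁(A) ≥ σ₂(A) ≥ ⋯` of `A` (0-indexed). -/
noncomputable def singVal {M N : ℕ} (A : Matrix (Fin M) (Fin N) ℂ) (i : ℕ) : ℝ :=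
  if h : i < N then
    Real.sqrt (sortDesc (Matrix.isHermitian_conjTranspose_mul_self A).eigenvalues ⟨i, h⟩)
  else 0

/-- `δ̂_⊟(X,Y) = min over permutation matrices `P`, `Q` of `‖X − P Y Q‖_□`:
multiplying by permutation matrices on both sides is relabelling rows and
columns by permutations. -/
noncomputable def hatDeltaR {M N : ℕ} (X Y : Matrix (Fin M) (Fin N) ℂ) : ℝ :=
  ⨅ p : Equiv.Perm (Fin M) × Equiv.Perm (Fin N), cutNorm (X - Y.submatrix p.1 p.2)

/-- `A^{(p,q)} = A ⊗ J_{p,q}`, realised as a matrix indexed by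
`Fin (m * p) × Fin (n * q)`. -/
def blowupR {m n : ℕ} (A : Matrix (Fin m) (Fin n) ℂ) (p q : ℕ) :
    Matrix (Fin (m * p)) (Fin (n * q)) ℂ :=
  Matrix.of fun i j => A (finProdFinEquiv.symm i).1 (finProdFinEquiv.symm j).1

/-- The cut-distance of arbitrary matrices `A` (size `m × n`) and `B`
(size `r × s`): `δ_⊟(A,B) = inf_{k ≥ 1} δ̂_⊟(A^{(kr,ks)}, B^{(km,kn)})`. -/
noncomputable def cutDistR {m n r s : ℕ} (A : Matrix (Fin m) (Fin n) ℂ)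
    (B : Matrix (Fin r) (Fin s) ℂ) : ℝ :=
  ⨅ k : ℕ, hatDeltaR (blowupR A ((k + 1) * r) ((k + 1) * s))
    ((blowupR B ((k + 1) * m) ((k + 1) * n)).submatrix
      (finCongr (by ring)) (finCongr (by ring)))

namespace SVProof
open scoped ComplexOrder

variable {M N M' N' : ℕ}

/-! ### quadratic form and squared norm -/

noncomputable def qf (H : Matrix (Fin N) (Fin N) ℂ) (x : Fin N → ℂ) : ℝ :=
  (star x ⬝ᵥ (H *ᵥ x)).re

noncomputable def nrm2 (x : Fin N → ℂ) : ℝ := ∑ i, Complex.normSq (x i)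

lemma nrm2_nonneg (x : Fin N → ℂ) : 0 ≤ nrm2 x :=
  Finset.sum_nonneg fun i _ => Complex.normSq_nonneg _

lemma dot_self_eq_nrm2 (x : Fin N → ℂ) : star x ⬝ᵥ x = (nrm2 x : ℂ) := by
  simp only [dotProduct, nrm2, Pi.star_apply, Complex.ofReal_sum]
  exact Finset.sum_congr rfl fun i _ => by
    rw [Complex.normSq_eq_conj_mul_self]; rfl

lemma nrm2_pos {x : Fin N → ℂ} (hx : x ≠ 0) : 0 < nrm2 x := by
  obtain ⟨i, hi⟩ := Function.ne_iff.1 hx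
  have h1 : 0 < Complex.normSq (x i) := by
    simpa [Complex.normSq_pos] using hi
  exact lt_of_lt_of_le h1 (Finset.single_le_sum
    (fun j _ => Complex.normSq_nonneg _) (Finset.mem_univ i))

lemma nrm2_smul (a : ℂ) (x : Fin N → ℂ) :
    nrm2 (a • x) = Complex.normSq a * nrm2 x := by
  simp [nrm2, Complex.normSq_mul, Finset.mul_sum]

lemma sqrt_nrm2_eq_norm (x : Fin N → ℂ) :
    Real.sqrt (nrm2 x) = ‖(WithLp.toLp 2 x : EuclideanSpace ℂ (Fin N))‖ := by
  rw [EuclideanSpace.norm_eq]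
  congr 1
  exact Finset.sum_congr rfl fun i _ => by
    rw [← Complex.sq_norm]

lemma sqrt_nrm2_sub_le (u v : Fin N → ℂ) :
    Real.sqrt (nrm2 (u - v)) ≤ Real.sqrt (nrm2 u) + Real.sqrt (nrm2 v) := by
  rw [sqrt_nrm2_eq_norm, sqrt_nrm2_eq_norm, sqrt_nrm2_eq_norm]
  exact norm_sub_le (WithLp.toLp 2 u : EuclideanSpace ℂ (Fin N)) (WithLp.toLp 2 v)

/-! ### sums and dot products -/

lemma sum_dot {ι : Type*} [Fintype ι] (f : ι → (Fin N → ℂ)) (v : Fin N → ℂ) :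
    (∑ s, f s) ⬝ᵥ v = ∑ s, f s ⬝ᵥ v := by
  simp only [dotProduct, Finset.sum_apply, Finset.sum_mul]
  exact Finset.sum_comm

lemma dot_sum {ι : Type*} [Fintype ι] (v : Fin N → ℂ) (f : ι → (Fin N → ℂ)) :
    v ⬝ᵥ (∑ t, f t) = ∑ t, v ⬝ᵥ f t := by
  simp only [dotProduct, Finset.sum_apply, Finset.mul_sum]
  exact Finset.sum_comm

lemma mulVec_sumv {ι : Type*} [Fintype ι] (H : Matrix (Fin N) (Fin N) ℂ)
    (f : ι → (Fin N → ℂ)) : H *ᵥ (∑ t, f t) = ∑ t, H *ᵥ f t := by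
  have h := map_sum (Matrix.mulVecLin H) f Finset.univ
  simpa only [Matrix.mulVecLin_apply] using h

lemma star_combo {ι : Type*} [Fintype ι] (c : ι → ℂ) (g : ι → (Fin N → ℂ)) :
    star (∑ s, c s • g s) = ∑ s, (starRingEnd ℂ) (c s) • star (g s) := by
  rw [star_sum]
  exact Finset.sum_congr rfl fun s _ => by rw [star_smul]; rfl

/-! ### orthonormal families -/

def ONF {ι : Type*} (g : ι → (Fin N → ℂ)) : Prop :=
  (∀ s, star (g s) ⬝ᵥ g s = 1) ∧ (∀ s t, s ≠ t → star (g s) ⬝ᵥ g t = 0)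

lemma dot_combo {ι : Type*} [Fintype ι] [DecidableEq ι] {g : ι → (Fin N → ℂ)}
    (hg : ONF g) (c d : ι → ℂ) :
    star (∑ s, c s • g s) ⬝ᵥ (∑ t, d t • g t)
      = ∑ t, (starRingEnd ℂ) (c t) * d t := by
  rw [star_combo, sum_dot]
  have h1 : ∀ s, ((starRingEnd ℂ) (c s) • star (g s)) ⬝ᵥ (∑ t, d t • g t)
      = (starRingEnd ℂ) (c s) * d s := by
    intro s
    rw [smul_dotProduct, dot_sum]
    have h2 : ∀ t, star (g s) ⬝ᵥ (d t • g t) = d t * (star (g s) ⬝ᵥ g t) := by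
      intro t; rw [dotProduct_smul]; rfl
    rw [Finset.sum_congr rfl fun t _ => h2 t]
    rw [Finset.sum_eq_single s (fun t _ hts => by rw [hg.2 s t (Ne.symm hts), mul_zero])
      (fun h => absurd (Finset.mem_univ s) h)]
    rw [hg.1 s, mul_one, smul_eq_mul]
  exact Finset.sum_congr rfl fun s _ => h1 s

lemma ONF.linearIndependent {ι : Type*} [Fintype ι] [DecidableEq ι]
    {g : ι → (Fin N → ℂ)} (hg : ONF g) : LinearIndependent ℂ g := by
  rw [Fintype.linearIndependent_iff]
  intro c hc t
  have h := congrArg (fun y => star (g t) ⬝ᵥ y) hc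
  simp only [dotProduct_zero] at h
  rw [dot_sum] at h
  rw [Finset.sum_congr rfl (fun s _ => by
    rw [dotProduct_smul, smul_eq_mul] : ∀ s ∈ Finset.univ,
      star (g t) ⬝ᵥ (c s • g s) = c s * (star (g t) ⬝ᵥ g s))] at h
  rw [Finset.sum_eq_single t (fun s _ hst => by rw [hg.2 t s (Ne.symm hst), mul_zero])
    (fun h => absurd (Finset.mem_univ t) h), hg.1 t, mul_one] at h
  exact h

lemma combo_ne_zero {ι : Type*} [Fintype ι] [DecidableEq ι] {g : ι → (Fin N → ℂ)}
    (hg : ONF g) {c : ι → ℂ} (hc : c ≠ 0) : (∑ t, c t • g t) ≠ 0 := by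
  intro h
  apply hc
  funext t
  exact Fintype.linearIndependent_iff.1 hg.linearIndependent c h t

lemma nrm2_combo {ι : Type*} [Fintype ι] [DecidableEq ι] {g : ι → (Fin N → ℂ)}
    (hg : ONF g) (c : ι → ℂ) :
    nrm2 (∑ t, c t • g t) = ∑ t, Complex.normSq (c t) := by
  have h := dot_combo hg c c
  rw [dot_self_eq_nrm2] at h
  have h2 : ((∑ t, Complex.normSq (c t) : ℝ) : ℂ)
      = ∑ t, (starRingEnd ℂ) (c t) * c t := by
    push_cast
    exact Finset.sum_congr rfl fun t _ => by
      rw [Complex.normSq_eq_conj_mul_self]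
  exact_mod_cast h.trans h2.symm

lemma qf_combo {ι : Type*} [Fintype ι] [DecidableEq ι]
    {H : Matrix (Fin N) (Fin N) ℂ} {g : ι → (Fin N → ℂ)} (hg : ONF g)
    {lam : ι → ℝ} (heig : ∀ t, H *ᵥ g t = ((lam t : ℝ) : ℂ) • g t) (c : ι → ℂ) :
    qf H (∑ t, c t • g t) = ∑ t, lam t * Complex.normSq (c t) := by
  have hmv : H *ᵥ (∑ t, c t • g t) = ∑ t, (c t * (lam t : ℂ)) • g t := by
    rw [mulVec_sumv]
    exact Finset.sum_congr rfl fun t _ => by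
      rw [Matrix.mulVec_smul, heig t, smul_smul]
  rw [qf, hmv, dot_combo hg]
  have h2 : (∑ t, (starRingEnd ℂ) (c t) * (c t * (lam t : ℂ)))
      = ((∑ t, lam t * Complex.normSq (c t) : ℝ) : ℂ) := by
    push_cast
    exact Finset.sum_congr rfl fun t _ => by
      rw [← mul_assoc, ← Complex.normSq_eq_conj_mul_self]
      ring
  rw [h2, Complex.ofReal_re]
/-! ### sorted eigenvalues and Courant–Fischer -/

noncomputable def sIdx (f : Fin N → ℝ) : Equiv.Perm (Fin N) :=
  Fin.revPerm.trans (Tuple.sort f)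

lemma sortDesc_eq (f : Fin N → ℝ) (i : Fin N) :
    sortDesc f i = f (sIdx f i) := rfl

lemma sortDesc_anti (f : Fin N → ℝ) : Antitone (sortDesc f) := by
  intro i j hij
  exact Tuple.monotone_sort f (Fin.rev_le_rev.2 hij)

variable {H : Matrix (Fin N) (Fin N) ℂ}

lemma onf_eigen (hH : H.IsHermitian) :
    ONF (fun j : Fin N => ⇑(hH.eigenvectorBasis j)) := by
  have h := hH.eigenvectorBasis.orthonormal
  rw [orthonormal_iff_ite] at h
  constructor
  · intro s
    have h2 := h s s
    rw [EuclideanSpace.inner_eq_star_dotProduct, dotProduct_comm] at h2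
    simpa using h2
  · intro s t hst
    have h2 := h s t
    rw [EuclideanSpace.inner_eq_star_dotProduct, dotProduct_comm] at h2
    simpa [hst] using h2

lemma mulVec_eigen (hH : H.IsHermitian) (j : Fin N) :
    H *ᵥ ⇑(hH.eigenvectorBasis j)
      = ((hH.eigenvalues j : ℝ) : ℂ) • ⇑(hH.eigenvectorBasis j) := by
  rw [hH.mulVec_eigenvectorBasis]
  funext k
  simp [Complex.real_smul]

lemma onf_comp {ι : Type*} (hH : H.IsHermitian) (idx : ι → Fin N)
    (hinj : Function.Injective idx) :
    ONF (fun t => ⇑(hH.eigenvectorBasis (idx t))) :=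
  ⟨fun s => (onf_eigen hH).1 (idx s),
   fun s t hst => (onf_eigen hH).2 (idx s) (idx t) (fun hc => hst (hinj hc))⟩

/-- Courant–Fischer, existence direction. -/
theorem lower_family (hH : H.IsHermitian) (j : ℕ) (hj : j < N) :
    ∃ g : Fin (j+1) → (Fin N → ℂ), ONF g ∧
      ∀ c : Fin (j+1) → ℂ,
        sortDesc hH.eigenvalues ⟨j, hj⟩ * nrm2 (∑ t, c t • g t)
          ≤ qf H (∑ t, c t • g t) := by
  classical
  set e : Equiv.Perm (Fin N) := sIdx hH.eigenvalues with he
  have hemb : ∀ t : Fin (j+1), (t : ℕ) < N :=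
    fun t => lt_of_le_of_lt (Nat.lt_succ_iff.1 t.isLt) hj
  set idx : Fin (j+1) → Fin N := fun t => e ⟨(t : ℕ), hemb t⟩ with hidx
  have hinj : Function.Injective idx := by
    intro s t hst
    have h1 := e.injective hst
    exact Fin.ext (congrArg (fun z : Fin N => z.val) h1)
  set g : Fin (j+1) → (Fin N → ℂ) := fun t => ⇑(hH.eigenvectorBasis (idx t)) with hgdef
  have hONF : ONF g := onf_comp hH idx hinj
  have heig : ∀ t, H *ᵥ g t = ((hH.eigenvalues (idx t) : ℝ) : ℂ) • g t :=
    fun t => mulVec_eigen hH (idx t)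
  refine ⟨g, hONF, fun c => ?_⟩
  rw [qf_combo hONF heig c, nrm2_combo hONF c, Finset.mul_sum]
  refine Finset.sum_le_sum fun t _ => ?_
  have h1 : sortDesc hH.eigenvalues ⟨j, hj⟩ ≤ sortDesc hH.eigenvalues ⟨(t : ℕ), hemb t⟩ := by
    apply sortDesc_anti
    exact Fin.mk_le_mk.2 (Nat.lt_succ_iff.1 t.isLt)
  rw [sortDesc_eq] at h1
  exact mul_le_mul_of_nonneg_right h1 (Complex.normSq_nonneg _)

/-- Courant–Fischer, other direction. -/
theorem upper_combo (hH : H.IsHermitian) (j : ℕ) (hj : j < N)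
    (g : Fin (j+1) → (Fin N → ℂ)) (hg : LinearIndependent ℂ g) :
    ∃ c : Fin (j+1) → ℂ, (∑ t, c t • g t) ≠ 0 ∧
      qf H (∑ t, c t • g t)
        ≤ sortDesc hH.eigenvalues ⟨j, hj⟩ * nrm2 (∑ t, c t • g t) := by
  classical
  set e : Equiv.Perm (Fin N) := sIdx hH.eigenvalues with he
  have hwidx : ∀ t : Fin (N - j), j + (t : ℕ) < N := fun t => by
    have := t.isLt; omega
  set idx : Fin (N - j) → Fin N := fun t => e ⟨j + (t : ℕ), hwidx t⟩ with hidx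
  have hinj : Function.Injective idx := by
    intro s t hst
    have h1 := congrArg (fun z : Fin N => z.val) (e.injective hst)
    simp only at h1
    exact Fin.ext (by omega)
  set w : Fin (N - j) → (Fin N → ℂ) := fun t => ⇑(hH.eigenvectorBasis (idx t)) with hw
  have hONw : ONF w := onf_comp hH idx hinj
  set V : Submodule ℂ (Fin N → ℂ) := Submodule.span ℂ (Set.range g) with hV
  set W : Submodule ℂ (Fin N → ℂ) := Submodule.span ℂ (Set.range w) with hWdef
  have hdV : Module.finrank ℂ V = j + 1 := by
    rw [hV, finrank_span_eq_card hg, Fintype.card_fin]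
  have hdW : Module.finrank ℂ W = N - j := by
    rw [hWdef, finrank_span_eq_card hONw.linearIndependent, Fintype.card_fin]
  have hne : V ⊓ W ≠ ⊥ := by
    intro hbot
    have h1 := Submodule.finrank_sup_add_finrank_inf_eq V W
    rw [hbot, finrank_bot, hdV, hdW] at h1
    have h2 : Module.finrank ℂ (V ⊔ W : Submodule ℂ (Fin N → ℂ)) ≤ N := by
      have h3 := Submodule.finrank_le (V ⊔ W)
      rwa [Module.finrank_fin_fun] at h3
    omega
  obtain ⟨x, hxVW, hx0⟩ := (Submodule.ne_bot_iff _).1 hne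
  obtain ⟨c, hc⟩ := (Submodule.mem_span_range_iff_exists_fun ℂ).1 (hxVW.1 : x ∈ V)
  obtain ⟨d, hd⟩ := (Submodule.mem_span_range_iff_exists_fun ℂ).1 (hxVW.2 : x ∈ W)
  refine ⟨c, ?_, ?_⟩
  · rw [hc]; exact hx0
  · rw [hc, ← hd]
    rw [qf_combo hONw (lam := fun t => hH.eigenvalues (idx t))
      (fun t => mulVec_eigen hH (idx t)) d]
    rw [nrm2_combo hONw d, Finset.mul_sum]
    refine Finset.sum_le_sum fun t _ => ?_
    have h1 : sortDesc hH.eigenvalues ⟨j + (t : ℕ), hwidx t⟩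
        ≤ sortDesc hH.eigenvalues ⟨j, hj⟩ := by
      apply sortDesc_anti
      exact Fin.mk_le_mk.2 (Nat.le_add_right _ _)
    rw [sortDesc_eq] at h1
    exact mul_le_mul_of_nonneg_right h1 (Complex.normSq_nonneg _)

/-- Rayleigh bound. -/
theorem qf_le_mu0 (hH : H.IsHermitian) (hN : 0 < N) (x : Fin N → ℂ) :
    qf H x ≤ sortDesc hH.eigenvalues ⟨0, hN⟩ * nrm2 x := by
  classical
  have hx : ∃ c : Fin N → ℂ, x = ∑ t, c t • ⇑(hH.eigenvectorBasis t) := by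
    refine ⟨fun t => hH.eigenvectorBasis.repr (WithLp.toLp 2 x : EuclideanSpace ℂ (Fin N)) t, ?_⟩
    have h := congrArg WithLp.ofLp
      (hH.eigenvectorBasis.sum_repr (WithLp.toLp 2 x : EuclideanSpace ℂ (Fin N))).symm
    rw [WithLp.ofLp_sum] at h
    exact h
  obtain ⟨c, hc⟩ := hx
  rw [hc, qf_combo (onf_eigen hH) (lam := hH.eigenvalues) (fun t => mulVec_eigen hH t) c,
    nrm2_combo (onf_eigen hH) c, Finset.mul_sum]
  refine Finset.sum_le_sum fun t _ => ?_
  set e : Equiv.Perm (Fin N) := sIdx hH.eigenvalues with he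
  have h1 : hH.eigenvalues t = sortDesc hH.eigenvalues (e.symm t) := by
    rw [sortDesc_eq]
    exact congrArg _ (e.apply_symm_apply t).symm
  have h2 : sortDesc hH.eigenvalues (e.symm t) ≤ sortDesc hH.eigenvalues ⟨0, hN⟩ := by
    apply sortDesc_anti
    exact Fin.mk_le_mk.2 (Nat.zero_le _)
  rw [h1]
  exact mul_le_mul_of_nonneg_right h2 (Complex.normSq_nonneg _)

/-- `μ₀` is attained by a unit eigenvector. -/
theorem exists_top_eigvec (hH : H.IsHermitian) (hN : 0 < N) :
    ∃ v : Fin N → ℂ, nrm2 v = 1 ∧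
      H *ᵥ v = ((sortDesc hH.eigenvalues ⟨0, hN⟩ : ℝ) : ℂ) • v := by
  set e : Equiv.Perm (Fin N) := sIdx hH.eigenvalues with he
  refine ⟨⇑(hH.eigenvectorBasis (e ⟨0, hN⟩)), ?_, ?_⟩
  · have h := (onf_eigen hH).1 (e ⟨0, hN⟩)
    rw [dot_self_eq_nrm2] at h
    exact_mod_cast h
  · rw [sortDesc_eq]
    exact mulVec_eigen hH _

/-! ### transfer principles -/

lemma mu_ge_of_family (hH : H.IsHermitian) (j : ℕ) (hj : j < N) {K : ℝ}
    (g : Fin (j+1) → (Fin N → ℂ)) (hg : LinearIndependent ℂ g)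
    (hbound : ∀ c : Fin (j+1) → ℂ, K * nrm2 (∑ t, c t • g t) ≤ qf H (∑ t, c t • g t)) :
    K ≤ sortDesc hH.eigenvalues ⟨j, hj⟩ := by
  obtain ⟨c, hx0, hup⟩ := upper_combo hH j hj g hg
  have h1 := hbound c
  have h2 := nrm2_pos hx0
  nlinarith [h1.trans hup]

lemma mu_le_of (hH : H.IsHermitian) (j : ℕ) (hj : j < N) {K : ℝ}
    (h : ∀ g : Fin (j+1) → (Fin N → ℂ), ONF g →
      ∃ c : Fin (j+1) → ℂ, (∑ t, c t • g t) ≠ 0 ∧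
        qf H (∑ t, c t • g t) ≤ K * nrm2 (∑ t, c t • g t)) :
    sortDesc hH.eigenvalues ⟨j, hj⟩ ≤ K := by
  obtain ⟨g, hONF, hlow⟩ := lower_family hH j hj
  obtain ⟨c, hx0, hup⟩ := h g hONF
  have h1 := hlow c
  have h2 := nrm2_pos hx0
  nlinarith [h1.trans hup]

/-! ### Gram matrices, singular values, Weyl -/

lemma qf_gram (Z : Matrix (Fin M) (Fin N) ℂ) (x : Fin N → ℂ) :
    qf (Zᴴ * Z) x = nrm2 (Z *ᵥ x) := by
  rw [qf, ← Matrix.mulVec_mulVec, Matrix.dotProduct_mulVec, ← Matrix.star_mulVec,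
    dot_self_eq_nrm2, Complex.ofReal_re]

lemma muGram_nonneg (Z : Matrix (Fin M) (Fin N) ℂ) (j : Fin N) :
    0 ≤ sortDesc (Matrix.isHermitian_conjTranspose_mul_self Z).eigenvalues j := by
  rw [sortDesc_eq]
  exact (Matrix.posSemidef_conjTranspose_mul_self Z).eigenvalues_nonneg _

noncomputable def sv (Z : Matrix (Fin M) (Fin N) ℂ) (j : Fin N) : ℝ :=
  Real.sqrt (sortDesc (Matrix.isHermitian_conjTranspose_mul_self Z).eigenvalues j)

lemma sv_nonneg (Z : Matrix (Fin M) (Fin N) ℂ) (j : Fin N) : 0 ≤ sv Z j :=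
  Real.sqrt_nonneg _

lemma sv_sq (Z : Matrix (Fin M) (Fin N) ℂ) (j : Fin N) :
    sv Z j ^ 2 = sortDesc (Matrix.isHermitian_conjTranspose_mul_self Z).eigenvalues j :=
  Real.sq_sqrt (muGram_nonneg Z j)

lemma singVal_eq_sv (Z : Matrix (Fin M) (Fin N) ℂ) (j : ℕ) (hj : j < N) :
    singVal Z j = sv Z ⟨j, hj⟩ := by
  rw [singVal, dif_pos hj]; rfl

lemma sqrt_nrm2_mulVec_le (Z : Matrix (Fin M) (Fin N) ℂ) (hN : 0 < N) (x : Fin N → ℂ) :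
    Real.sqrt (nrm2 (Z *ᵥ x)) ≤ sv Z ⟨0, hN⟩ * Real.sqrt (nrm2 x) := by
  have h1 : nrm2 (Z *ᵥ x) ≤ sv Z ⟨0, hN⟩ ^ 2 * nrm2 x := by
    rw [sv_sq, ← qf_gram]
    exact qf_le_mu0 _ hN x
  calc Real.sqrt (nrm2 (Z *ᵥ x)) ≤ Real.sqrt (sv Z ⟨0, hN⟩ ^ 2 * nrm2 x) :=
        Real.sqrt_le_sqrt h1
    _ = sv Z ⟨0, hN⟩ * Real.sqrt (nrm2 x) := by
        rw [Real.sqrt_mul (by positivity), Real.sqrt_sq (sv_nonneg _ _)]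

/-- One-sided Weyl inequality for singular values. -/
lemma weyl_one (X W : Matrix (Fin M) (Fin N) ℂ) (j : ℕ) (hj : j < N) :
    sv W ⟨j, hj⟩ ≤ sv X ⟨j, hj⟩ + sv (X - W) ⟨0, lt_of_le_of_lt (Nat.zero_le j) hj⟩ := by
  classical
  have hN : 0 < N := lt_of_le_of_lt (Nat.zero_le j) hj
  obtain ⟨g, hONF, hlow⟩ := lower_family (Matrix.isHermitian_conjTranspose_mul_self W) j hj
  obtain ⟨c, hx0, hup⟩ := upper_combo (Matrix.isHermitian_conjTranspose_mul_self X) j hj g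
    hONF.linearIndependent
  set x : Fin N → ℂ := ∑ t, c t • g t with hx
  have hW : sv W ⟨j, hj⟩ * Real.sqrt (nrm2 x) ≤ Real.sqrt (nrm2 (W *ᵥ x)) := by
    have h1 : sv W ⟨j, hj⟩ ^ 2 * nrm2 x ≤ nrm2 (W *ᵥ x) := by
      rw [sv_sq, ← qf_gram]
      exact hlow c
    have h2 : Real.sqrt (sv W ⟨j, hj⟩ ^ 2 * nrm2 x) ≤ Real.sqrt (nrm2 (W *ᵥ x)) :=
      Real.sqrt_le_sqrt h1
    rwa [Real.sqrt_mul (by positivity), Real.sqrt_sq (sv_nonneg _ _)] at h2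
  have hX : Real.sqrt (nrm2 (X *ᵥ x)) ≤ sv X ⟨j, hj⟩ * Real.sqrt (nrm2 x) := by
    have h1 : nrm2 (X *ᵥ x) ≤ sv X ⟨j, hj⟩ ^ 2 * nrm2 x := by
      rw [sv_sq, ← qf_gram]
      exact hup
    have h2 := Real.sqrt_le_sqrt h1
    rwa [Real.sqrt_mul (by positivity), Real.sqrt_sq (sv_nonneg _ _)] at h2
  have hZ := sqrt_nrm2_mulVec_le (X - W) hN x
  have htri : Real.sqrt (nrm2 (W *ᵥ x))
      ≤ Real.sqrt (nrm2 (X *ᵥ x)) + Real.sqrt (nrm2 ((X - W) *ᵥ x)) := by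
    have h3 : W *ᵥ x = X *ᵥ x - (X - W) *ᵥ x := by
      rw [Matrix.sub_mulVec]; abel
    rw [h3]
    exact sqrt_nrm2_sub_le _ _
  have hpos : 0 < Real.sqrt (nrm2 x) := Real.sqrt_pos.2 (nrm2_pos hx0)
  have hchain : sv W ⟨j, hj⟩ * Real.sqrt (nrm2 x)
      ≤ (sv X ⟨j, hj⟩ + sv (X - W) ⟨0, hN⟩) * Real.sqrt (nrm2 x) := by
    calc sv W ⟨j, hj⟩ * Real.sqrt (nrm2 x) ≤ Real.sqrt (nrm2 (W *ᵥ x)) := hW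
      _ ≤ Real.sqrt (nrm2 (X *ᵥ x)) + Real.sqrt (nrm2 ((X - W) *ᵥ x)) := htri
      _ ≤ sv X ⟨j, hj⟩ * Real.sqrt (nrm2 x)
            + sv (X - W) ⟨0, hN⟩ * Real.sqrt (nrm2 x) := add_le_add hX hZ
      _ = (sv X ⟨j, hj⟩ + sv (X - W) ⟨0, hN⟩) * Real.sqrt (nrm2 x) := by ring
  exact le_of_mul_le_mul_right hchain hpos

lemma mu_congr {H H' : Matrix (Fin N) (Fin N) ℂ} (h : H = H')
    (hH : H.IsHermitian) (hH' : H'.IsHermitian) (i : Fin N) :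
    sortDesc hH.eigenvalues i = sortDesc hH'.eigenvalues i := by
  subst h; rfl

lemma sv_neg_sub (X W : Matrix (Fin M) (Fin N) ℂ) (j : Fin N) :
    sv (W - X) j = sv (X - W) j := by
  have hG : (W - X)ᴴ * (W - X) = (X - W)ᴴ * (X - W) := by
    have h : W - X = -(X - W) := (neg_sub X W).symm
    rw [h, Matrix.conjTranspose_neg, Matrix.neg_mul, Matrix.mul_neg, neg_neg]
  unfold sv
  congr 1
  exact mu_congr hG _ _ j

/-- Two-sided Weyl. -/
lemma weyl (X W : Matrix (Fin M) (Fin N) ℂ) (j : ℕ) (hj : j < N) :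
    |sv X ⟨j, hj⟩ - sv W ⟨j, hj⟩| ≤ sv (X - W) ⟨0, lt_of_le_of_lt (Nat.zero_le j) hj⟩ := by
  have hN : 0 < N := lt_of_le_of_lt (Nat.zero_le j) hj
  rw [abs_sub_le_iff]
  constructor
  · have h := weyl_one W X j hj
    rw [sv_neg_sub] at h
    linarith
  · have h := weyl_one X W j hj
    linarith

/-! ### invariance under reindexing -/

lemma gram_submatrix (Y : Matrix (Fin M) (Fin N) ℂ) (e₁ : Fin M' ≃ Fin M)
    (e₂ : Fin N' ≃ Fin N) :
    (Y.submatrix ⇑e₁ ⇑e₂)ᴴ * (Y.submatrix ⇑e₁ ⇑e₂) = (Yᴴ * Y).submatrix ⇑e₂ ⇑e₂ := by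
  ext j j'
  simp only [Matrix.mul_apply, Matrix.conjTranspose_apply, Matrix.submatrix_apply]
  exact e₁.sum_comp (fun i => star (Y i (e₂ j)) * Y i (e₂ j'))

lemma comp_equiv_combo {ι : Type*} [Fintype ι] (e : Fin N' ≃ Fin N) (c : ι → ℂ)
    (g : ι → (Fin N → ℂ)) :
    (∑ t, c t • g t) ∘ ⇑e = ∑ t, c t • (g t ∘ ⇑e) := by
  funext jj
  simp [Finset.sum_apply]

lemma nrm2_comp_equiv (e : Fin N' ≃ Fin N) (x : Fin N → ℂ) :
    nrm2 (x ∘ ⇑e) = nrm2 x := by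
  unfold nrm2
  exact e.sum_comp (fun i => Complex.normSq (x i))

lemma mulVec_submatrix_equiv (G : Matrix (Fin N) (Fin N) ℂ) (e : Fin N' ≃ Fin N)
    (x : Fin N → ℂ) :
    (G.submatrix ⇑e ⇑e) *ᵥ (x ∘ ⇑e) = (G *ᵥ x) ∘ ⇑e := by
  funext j
  simp only [Matrix.mulVec, dotProduct, Matrix.submatrix_apply, Function.comp_apply]
  exact e.sum_comp (fun i => G (e j) i * x i)

lemma qf_submatrix_equiv (G : Matrix (Fin N) (Fin N) ℂ) (e : Fin N' ≃ Fin N)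
    (x : Fin N → ℂ) : qf (G.submatrix ⇑e ⇑e) (x ∘ ⇑e) = qf G x := by
  unfold qf
  rw [mulVec_submatrix_equiv]
  congr 1
  exact e.sum_comp (fun i => star (x i) * (G *ᵥ x) i)

lemma mu_submatrix_ge {G : Matrix (Fin N) (Fin N) ℂ} (hG : G.IsHermitian)
    (e : Fin N' ≃ Fin N) (j : ℕ) (hj : j < N) (hj' : j < N') :
    sortDesc hG.eigenvalues ⟨j, hj⟩
      ≤ sortDesc (hG.submatrix ⇑e).eigenvalues ⟨j, hj'⟩ := by
  classical
  obtain ⟨g, hONF, hlow⟩ := lower_family hG j hj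
  refine mu_ge_of_family (hG.submatrix ⇑e) j hj' (fun t => (g t) ∘ ⇑e) ?_ ?_
  · rw [Fintype.linearIndependent_iff]
    intro c hc t
    have h1 : (∑ t, c t • g t) ∘ ⇑e = 0 := by
      rw [comp_equiv_combo]; exact hc
    have h2 : (∑ t, c t • g t) = 0 := by
      funext i
      have := congrFun h1 (e.symm i)
      simpa using this
    exact Fintype.linearIndependent_iff.1 hONF.linearIndependent c h2 t
  · intro c
    rw [← comp_equiv_combo, nrm2_comp_equiv, qf_submatrix_equiv]
    exact hlow c

lemma mu_submatrix_eq {G : Matrix (Fin N) (Fin N) ℂ} (hG : G.IsHermitian)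
    (e : Fin N' ≃ Fin N) (j : ℕ) (hj : j < N) (hj' : j < N') :
    sortDesc (hG.submatrix ⇑e).eigenvalues ⟨j, hj'⟩ = sortDesc hG.eigenvalues ⟨j, hj⟩ := by
  refine le_antisymm ?_ (mu_submatrix_ge hG e j hj hj')
  have h2 := mu_submatrix_ge (hG.submatrix ⇑e) e.symm j hj' hj
  have h3 : (G.submatrix ⇑e ⇑e).submatrix ⇑e.symm ⇑e.symm = G := by
    ext i k; simp
  rwa [mu_congr h3 ((hG.submatrix ⇑e).submatrix ⇑e.symm) hG ⟨j, hj⟩] at h2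

lemma sv_submatrix (Y : Matrix (Fin M) (Fin N) ℂ) (e₁ : Fin M' ≃ Fin M)
    (e₂ : Fin N' ≃ Fin N) (j : ℕ) (hj : j < N) (hj' : j < N') :
    sv (Y.submatrix ⇑e₁ ⇑e₂) ⟨j, hj'⟩ = sv Y ⟨j, hj⟩ := by
  unfold sv
  congr 1
  rw [mu_congr (gram_submatrix Y e₁ e₂)
    (Matrix.isHermitian_conjTranspose_mul_self _)
    ((Matrix.isHermitian_conjTranspose_mul_self Y).submatrix ⇑e₂) ⟨j, hj'⟩]
  exact mu_submatrix_eq _ e₂ j hj hj'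

/-! ### blowup -/

/-- column projection -/
def cpr (n q : ℕ) (jj : Fin (n * q)) : Fin n := (finProdFinEquiv.symm jj).1

lemma sum_blowup_index {n q : ℕ} {β : Type*} [AddCommMonoid β] (F : Fin n → β) :
    ∑ jj : Fin (n * q), F (cpr n q jj) = q • ∑ a : Fin n, F a := by
  have h1 : ∑ jj : Fin (n * q), F (cpr n q jj)
      = ∑ x : Fin n × Fin q, F x.1 :=
    Equiv.sum_comp finProdFinEquiv.symm (fun x : Fin n × Fin q => F x.1)
  rw [h1, Fintype.sum_prod_type]
  rw [Finset.sum_comm]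
  simp [Finset.sum_const]

/-- lift along columns -/
def psiMap (n q : ℕ) (w : Fin n → ℂ) : Fin (n * q) → ℂ := fun jj => w (cpr n q jj)

lemma psi_combo {n q : ℕ} {ι : Type*} [Fintype ι] (c : ι → ℂ) (g : ι → (Fin n → ℂ)) :
    psiMap n q (∑ t, c t • g t) = ∑ t, c t • psiMap n q (g t) := by
  funext jj
  simp [psiMap, Finset.sum_apply]

lemma psi_eq_zero {n q : ℕ} {w : Fin n → ℂ} (hq : 0 < q) (h : psiMap n q w = 0) :
    w = 0 := by
  funext a
  have h1 := congrFun h (finProdFinEquiv (a, ⟨0, hq⟩))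
  simpa [psiMap, cpr] using h1

lemma nrm2_psi {n q : ℕ} (w : Fin n → ℂ) : nrm2 (psiMap n q w) = q * nrm2 w := by
  unfold nrm2 psiMap
  rw [sum_blowup_index (fun a => Complex.normSq (w a))]
  simp [nsmul_eq_mul]

section Blowup

variable {m n : ℕ} (A : Matrix (Fin m) (Fin n) ℂ) (p q : ℕ)

lemma gram_blowup_apply (jj jj' : Fin (n * q)) :
    ((blowupR A p q)ᴴ * (blowupR A p q)) jj jj'
      = (p : ℂ) * ((Aᴴ * A) (cpr n q jj) (cpr n q jj')) := by
  simp only [Matrix.mul_apply, Matrix.conjTranspose_apply, blowupR, Matrix.of_apply]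
  have h1 : ∑ i : Fin (m * p),
        star (A (cpr m p i) (cpr n q jj)) * A (cpr m p i) (cpr n q jj')
      = p • ∑ a : Fin m, star (A a (cpr n q jj)) * A a (cpr n q jj') :=
    sum_blowup_index (fun a => star (A a (cpr n q jj)) * A a (cpr n q jj'))
  rw [show (∑ i : Fin (m * p), star (A (finProdFinEquiv.symm i).1 (finProdFinEquiv.symm jj).1)
      * A (finProdFinEquiv.symm i).1 (finProdFinEquiv.symm jj').1)
      = ∑ i : Fin (m * p), star (A (cpr m p i) (cpr n q jj)) * A (cpr m p i) (cpr n q jj')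
      from rfl, h1, nsmul_eq_mul]

lemma mulVec_gram_blowup (w : Fin n → ℂ) :
    ((blowupR A p q)ᴴ * (blowupR A p q)) *ᵥ psiMap n q w
      = psiMap n q ((((p * q : ℕ) : ℂ)) • ((Aᴴ * A) *ᵥ w)) := by
  funext jj
  simp only [Matrix.mulVec, dotProduct, psiMap, Pi.smul_apply, smul_eq_mul]
  rw [Finset.sum_congr rfl (fun jj' _ => by rw [gram_blowup_apply A p q jj jj'])]
  rw [show (∑ jj' : Fin (n * q), (p:ℂ) * (Aᴴ * A) (cpr n q jj) (cpr n q jj')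
        * w (cpr n q jj'))
      = ∑ jj' : Fin (n * q),
        (fun a => (p:ℂ) * (Aᴴ * A) (cpr n q jj) a * w a) (cpr n q jj') from rfl]
  rw [sum_blowup_index (fun a => (p:ℂ) * (Aᴴ * A) (cpr n q jj) a * w a), nsmul_eq_mul]
  push_cast
  simp only [Finset.mul_sum]
  exact Finset.sum_congr rfl fun a _ => by ring

lemma qf_gram_blowup_psi (w : Fin n → ℂ) :
    qf ((blowupR A p q)ᴴ * (blowupR A p q)) (psiMap n q w)
      = (p * q * q : ℝ) * qf (Aᴴ * A) w := by
  unfold qf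
  rw [mulVec_gram_blowup]
  have h1 : star (psiMap n q w) ⬝ᵥ psiMap n q ((((p * q : ℕ) : ℂ)) • ((Aᴴ * A) *ᵥ w))
      = (q : ℂ) * (((p * q : ℕ) : ℂ) * (star w ⬝ᵥ ((Aᴴ * A) *ᵥ w))) := by
    simp only [dotProduct, psiMap, Pi.star_apply, Pi.smul_apply, smul_eq_mul]
    rw [show (∑ jj : Fin (n * q), star (w (cpr n q jj))
          * (((p * q : ℕ) : ℂ) * ((Aᴴ * A) *ᵥ w) (cpr n q jj)))
        = ∑ jj : Fin (n * q),
          (fun a => star (w a) * (((p * q : ℕ) : ℂ) * ((Aᴴ * A) *ᵥ w) a)) (cpr n q jj)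
        from rfl]
    rw [sum_blowup_index (fun a => star (w a) * (((p * q : ℕ) : ℂ) * ((Aᴴ * A) *ᵥ w) a))]
    rw [nsmul_eq_mul]
    simp only [dotProduct, Finset.mul_sum]
    exact Finset.sum_congr rfl fun a _ => by ring
  rw [h1]
  have h2 : ((q : ℂ) * (((p * q : ℕ) : ℂ) * (star w ⬝ᵥ ((Aᴴ * A) *ᵥ w))))
      = (((p * q * q : ℕ) : ℝ) : ℂ) * (star w ⬝ᵥ ((Aᴴ * A) *ᵥ w)) := by
    push_cast
    ring
  rw [h2, Complex.re_ofReal_mul]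
  push_cast
  ring

end Blowup

noncomputable def phiMap (n q : ℕ) (x : Fin (n * q) → ℂ) : Fin n → ℂ :=
  fun a => ∑ b : Fin q, x (finProdFinEquiv (a, b))

lemma phi_combo {ι : Type*} [Fintype ι] (c : ι → ℂ) (v : ι → (Fin (n * q) → ℂ)) :
    phiMap n q (∑ t, c t • v t) = ∑ t, c t • phiMap n q (v t) := by
  funext a
  simp only [phiMap, Finset.sum_apply, Pi.smul_apply, smul_eq_mul, Finset.mul_sum]
  exact Finset.sum_comm

lemma phi_zero {n q : ℕ} : phiMap n q 0 = 0 := by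
  funext a; simp [phiMap]

lemma qf_zero (H : Matrix (Fin N) (Fin N) ℂ) : qf H 0 = 0 := by
  simp [qf]

lemma dot_psi {n q : ℕ} (x : Fin (n * q) → ℂ) (u : Fin n → ℂ) :
    star x ⬝ᵥ psiMap n q u = star (phiMap n q x) ⬝ᵥ u := by
  simp only [dotProduct, psiMap, phiMap, Pi.star_apply]
  rw [← Equiv.sum_comp (finProdFinEquiv : Fin n × Fin q ≃ Fin (n * q))
    (fun jj => star (x jj) * u (cpr n q jj))]
  rw [Fintype.sum_prod_type]
  refine Finset.sum_congr rfl fun a _ => ?_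
  simp only [cpr, Equiv.symm_apply_apply]
  rw [star_sum, Finset.sum_mul]

lemma nrm2_phi_le {n q : ℕ} (x : Fin (n * q) → ℂ) :
    nrm2 (phiMap n q x) ≤ q * nrm2 x := by
  unfold nrm2 phiMap
  have h1 : ∀ a : Fin n, Complex.normSq (∑ b, x (finProdFinEquiv (a, b)))
      ≤ q * ∑ b, Complex.normSq (x (finProdFinEquiv (a, b))) := by
    intro a
    have h2 : ‖∑ b, x (finProdFinEquiv (a, b))‖
        ≤ ∑ b, ‖x (finProdFinEquiv (a, b))‖ :=
      norm_sum_le _ _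
    have h3 : ‖∑ b, x (finProdFinEquiv (a, b))‖ ^ 2
        ≤ (∑ b, ‖x (finProdFinEquiv (a, b))‖) ^ 2 :=
      pow_le_pow_left₀ (norm_nonneg _) h2 2
    have h4 : (∑ b, ‖x (finProdFinEquiv (a, b))‖) ^ 2
        ≤ (Finset.univ.card : ℝ) * ∑ b, ‖x (finProdFinEquiv (a, b))‖ ^ 2 :=
      sq_sum_le_card_mul_sum_sq
    rw [Finset.card_univ, Fintype.card_fin] at h4
    calc Complex.normSq (∑ b, x (finProdFinEquiv (a, b)))
        = ‖∑ b, x (finProdFinEquiv (a, b))‖ ^ 2 := (Complex.sq_norm _).symm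
      _ ≤ (q : ℝ) * ∑ b, ‖x (finProdFinEquiv (a, b))‖ ^ 2 := h3.trans h4
      _ = q * ∑ b, Complex.normSq (x (finProdFinEquiv (a, b))) := by
          congr 1
          exact Finset.sum_congr rfl fun b _ => Complex.sq_norm _
  calc ∑ a : Fin n, Complex.normSq (∑ b, x (finProdFinEquiv (a, b)))
      ≤ ∑ a : Fin n, (q : ℝ) * ∑ b, Complex.normSq (x (finProdFinEquiv (a, b))) :=
        Finset.sum_le_sum fun a _ => h1 a
    _ = q * ∑ a : Fin n, ∑ b, Complex.normSq (x (finProdFinEquiv (a, b))) := by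
        rw [Finset.mul_sum]
    _ = q * ∑ jj, Complex.normSq (x jj) := by
        congr 1
        have h5 := Equiv.sum_comp (finProdFinEquiv : Fin n × Fin q ≃ Fin (n * q))
          (fun jj => Complex.normSq (x jj))
        rw [← h5, Fintype.sum_prod_type]

section Blowup2

variable {m n : ℕ} (A : Matrix (Fin m) (Fin n) ℂ) (p q : ℕ)

lemma mulVec_gram_blowup' (x : Fin (n * q) → ℂ) :
    ((blowupR A p q)ᴴ * (blowupR A p q)) *ᵥ x
      = psiMap n q (((p : ℕ) : ℂ) • ((Aᴴ * A) *ᵥ phiMap n q x)) := by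
  funext jj
  simp only [Matrix.mulVec, dotProduct, psiMap, Pi.smul_apply, smul_eq_mul, phiMap]
  rw [Finset.sum_congr rfl (fun jj' _ => by rw [gram_blowup_apply A p q jj jj'])]
  rw [← Equiv.sum_comp (finProdFinEquiv : Fin n × Fin q ≃ Fin (n * q))
    (fun jj' => (p : ℂ) * (Aᴴ * A) (cpr n q jj) (cpr n q jj') * x jj')]
  rw [Fintype.sum_prod_type]
  simp only [cpr, Equiv.symm_apply_apply]
  rw [Finset.mul_sum]
  refine Finset.sum_congr rfl fun a' _ => ?_
  rw [Finset.mul_sum, Finset.mul_sum]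
  exact Finset.sum_congr rfl fun b' _ => by ring

lemma qf_gram_blowup_phi (x : Fin (n * q) → ℂ) :
    qf ((blowupR A p q)ᴴ * (blowupR A p q)) x
      = (p : ℝ) * qf (Aᴴ * A) (phiMap n q x) := by
  unfold qf
  rw [mulVec_gram_blowup', dot_psi, dotProduct_smul]
  rw [show (((p : ℕ) : ℂ)) = (((p : ℕ) : ℝ) : ℂ) by push_cast; rfl]
  rw [smul_eq_mul, Complex.re_ofReal_mul]


lemma mu_blowup_ge (hq : 0 < q) (j : ℕ) (hj : j < n) (hj' : j < n * q) :
    (p * q : ℝ) * sortDesc (Matrix.isHermitian_conjTranspose_mul_self A).eigenvalues ⟨j, hj⟩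
      ≤ sortDesc (Matrix.isHermitian_conjTranspose_mul_self (blowupR A p q)).eigenvalues
          ⟨j, hj'⟩ := by
  classical
  obtain ⟨g, hONF, hlow⟩ := lower_family (Matrix.isHermitian_conjTranspose_mul_self A) j hj
  refine mu_ge_of_family (Matrix.isHermitian_conjTranspose_mul_self (blowupR A p q)) j hj'
    (fun t => psiMap n q (g t)) ?_ ?_
  · rw [Fintype.linearIndependent_iff]
    intro c hc t
    have h1 : psiMap n q (∑ t, c t • g t) = 0 := by
      rw [psi_combo]; exact hc
    have h2 := psi_eq_zero hq h1
    exact Fintype.linearIndependent_iff.1 hONF.linearIndependent c h2 t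
  · intro c
    rw [← psi_combo, nrm2_psi, qf_gram_blowup_psi]
    have h1 := hlow c
    set y := ∑ t, c t • g t
    calc (p * q : ℝ)
          * sortDesc (Matrix.isHermitian_conjTranspose_mul_self A).eigenvalues ⟨j, hj⟩
          * ((q : ℝ) * nrm2 y)
        = (p * q * q : ℝ)
          * (sortDesc (Matrix.isHermitian_conjTranspose_mul_self A).eigenvalues ⟨j, hj⟩
            * nrm2 y) := by ring
      _ ≤ (p * q * q : ℝ) * qf (Aᴴ * A) y := by
          apply mul_le_mul_of_nonneg_left h1 (by positivity)

lemma mu_blowup_le (hq : 0 < q) (j : ℕ) (hj : j < n) (hj' : j < n * q) :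
    sortDesc (Matrix.isHermitian_conjTranspose_mul_self (blowupR A p q)).eigenvalues ⟨j, hj'⟩
      ≤ (p * q : ℝ)
        * sortDesc (Matrix.isHermitian_conjTranspose_mul_self A).eigenvalues ⟨j, hj⟩ := by
  classical
  have hμ := muGram_nonneg A ⟨j, hj⟩
  refine mu_le_of (Matrix.isHermitian_conjTranspose_mul_self (blowupR A p q)) j hj' ?_
  intro g hONF
  by_cases hdep : LinearIndependent ℂ (fun t => phiMap n q (g t))
  · obtain ⟨c, hy0, hup⟩ := upper_combo (Matrix.isHermitian_conjTranspose_mul_self A) j hj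
      _ hdep
    refine ⟨c, ?_, ?_⟩
    · intro h0
      apply hy0
      rw [← phi_combo, h0, phi_zero]
    · rw [qf_gram_blowup_phi, phi_combo]
      have hnφ : nrm2 (∑ t, c t • phiMap n q (g t)) ≤ q * nrm2 (∑ t, c t • g t) := by
        rw [← phi_combo]
        exact nrm2_phi_le _
      calc (p : ℝ) * qf (Aᴴ * A) (∑ t, c t • phiMap n q (g t))
          ≤ (p : ℝ)
            * (sortDesc (Matrix.isHermitian_conjTranspose_mul_self A).eigenvalues ⟨j, hj⟩
              * nrm2 (∑ t, c t • phiMap n q (g t))) :=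
            mul_le_mul_of_nonneg_left hup (by positivity)
        _ ≤ (p : ℝ)
            * (sortDesc (Matrix.isHermitian_conjTranspose_mul_self A).eigenvalues ⟨j, hj⟩
              * ((q : ℝ) * nrm2 (∑ t, c t • g t))) := by
            apply mul_le_mul_of_nonneg_left _ (by positivity)
            exact mul_le_mul_of_nonneg_left hnφ hμ
        _ = (p * q : ℝ)
            * sortDesc (Matrix.isHermitian_conjTranspose_mul_self A).eigenvalues ⟨j, hj⟩
            * nrm2 (∑ t, c t • g t) := by ring
  · obtain ⟨c, hc0, t0, ht0⟩ := Fintype.not_linearIndependent_iff.1 hdep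
    refine ⟨c, ?_, ?_⟩
    · exact combo_ne_zero hONF (fun h => ht0 (by simpa using congrFun h t0))
    · rw [qf_gram_blowup_phi, phi_combo, hc0, qf_zero, mul_zero]
      exact mul_nonneg (mul_nonneg (by positivity) hμ) (nrm2_nonneg _)

end Blowup2

/-! ### spectral norm vs cut norm -/

lemma mu0_real_le {M N : ℕ} (W : Matrix (Fin M) (Fin N) ℂ) (hN : 0 < N)
    (c D : ℝ) (hc0 : 0 ≤ c)
    (hreal : ∀ i j, (W i j).im = 0)
    (hc : ∀ i j, ‖W i j‖ ≤ c)
    (hD : ∀ (S : Finset (Fin M)) (T : Finset (Fin N)),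
      |∑ i ∈ S, ∑ j ∈ T, (W i j).re| ≤ D) :
    sortDesc (Matrix.isHermitian_conjTranspose_mul_self W).eigenvalues ⟨0, hN⟩
      ≤ 4 * c * D := by
  classical
  set μ : ℝ := sortDesc (Matrix.isHermitian_conjTranspose_mul_self W).eigenvalues ⟨0, hN⟩
    with hμdef
  obtain ⟨v, hv1, hveq⟩ :=
    exists_top_eigvec (Matrix.isHermitian_conjTranspose_mul_self W) hN
  set w : Fin M → Fin N → ℝ := fun i j => (W i j).re with hwdef
  have hG : ∀ j k, (Wᴴ * W) j k = ((∑ i, w i j * w i k : ℝ) : ℂ) := by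
    intro j k
    rw [Matrix.mul_apply]
    rw [Complex.ofReal_sum]
    refine Finset.sum_congr rfl fun i _ => ?_
    have h1 := hreal i j
    have h2 := hreal i k
    apply Complex.ext
    · simp [Matrix.conjTranspose_apply, Complex.mul_re, h1, h2, hwdef]
    · simp [Matrix.conjTranspose_apply, Complex.mul_im, h1, h2]
  have hμ0 : 0 ≤ μ := muGram_nonneg W ⟨0, hN⟩
  -- maximal coordinate of v
  have hne : (Finset.univ : Finset (Fin N)).Nonempty := ⟨⟨0, hN⟩, Finset.mem_univ _⟩
  obtain ⟨j₀, _, hj₀⟩ :=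
    Finset.exists_max_image Finset.univ (fun j => ‖v j‖) hne
  have hvne : v ≠ 0 := by
    intro h
    rw [h] at hv1
    simp [nrm2] at hv1
  have hvj₀ : 0 < ‖v j₀‖ := by
    rcases lt_or_ge 0 (‖v j₀‖) with h | h
    · exact h
    · exfalso
      apply hvne
      funext j
      have h1 := hj₀ j (Finset.mem_univ j)
      have h2 : ‖v j‖ ≤ 0 := h1.trans h
      have h3 : ‖v j‖ = 0 := le_antisymm h2 (norm_nonneg _)
      simpa using h3
  -- eigen equation at j₀
  have h1 : μ * ‖v j₀‖ = ‖((Wᴴ * W) *ᵥ v) j₀‖ := by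
    rw [hveq]
    have h2 : ((((μ : ℝ) : ℂ)) • v) j₀ = ((μ : ℝ) : ℂ) * v j₀ := rfl
    rw [h2, norm_mul, Complex.norm_real, Real.norm_eq_abs, abs_of_nonneg hμ0]
  have h2 : ‖((Wᴴ * W) *ᵥ v) j₀‖
      ≤ (∑ k, ‖(Wᴴ * W) j₀ k‖) * ‖v j₀‖ := by
    calc ‖((Wᴴ * W) *ᵥ v) j₀‖
        ≤ ∑ k, ‖(Wᴴ * W) j₀ k * v k‖ :=
          norm_sum_le Finset.univ (fun k => (Wᴴ * W) j₀ k * v k)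
      _ = ∑ k, ‖(Wᴴ * W) j₀ k‖ * ‖v k‖ := by
          exact Finset.sum_congr rfl fun k _ => norm_mul _ _
      _ ≤ ∑ k, ‖(Wᴴ * W) j₀ k‖ * ‖v j₀‖ :=
          Finset.sum_le_sum fun k _ =>
            mul_le_mul_of_nonneg_left (hj₀ k (Finset.mem_univ k))
              (norm_nonneg _)
      _ = (∑ k, ‖(Wᴴ * W) j₀ k‖) * ‖v j₀‖ :=
          (Finset.sum_mul _ _ _).symm
  have h3 : μ ≤ ∑ k, ‖(Wᴴ * W) j₀ k‖ := by
    have h4 := h1.trans_le h2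
    exact le_of_mul_le_mul_right h4 hvj₀
  -- sign vectors
  set ε : Fin N → ℝ := fun k => if 0 ≤ ∑ i, w i j₀ * w i k then 1 else -1 with hεdef
  set h : Fin M → ℝ := fun i => ∑ k, ε k * w i k with hhdef
  have h4 : ∑ k, ‖(Wᴴ * W) j₀ k‖ = ∑ k, ε k * (∑ i, w i j₀ * w i k) := by
    refine Finset.sum_congr rfl fun k _ => ?_
    rw [hG j₀ k, Complex.norm_real, Real.norm_eq_abs]
    by_cases hk : 0 ≤ ∑ i, w i j₀ * w i k
    · rw [abs_of_nonneg hk, hεdef]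
      simp [hk]
    · rw [abs_of_neg (lt_of_not_ge hk), hεdef]
      simp [hk]
  have h5 : ∑ k, ε k * (∑ i, w i j₀ * w i k) = ∑ i, w i j₀ * h i := by
    calc ∑ k, ε k * (∑ i, w i j₀ * w i k)
        = ∑ k, ∑ i, ε k * (w i j₀ * w i k) := by
          exact Finset.sum_congr rfl fun k _ => Finset.mul_sum _ _ _
      _ = ∑ i, ∑ k, ε k * (w i j₀ * w i k) := Finset.sum_comm
      _ = ∑ i, w i j₀ * h i := by
          refine Finset.sum_congr rfl fun i _ => ?_
          rw [hhdef, Finset.mul_sum]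
          exact Finset.sum_congr rfl fun k _ => by ring
  have h6 : ∑ i, w i j₀ * h i ≤ c * ∑ i, |h i| := by
    rw [Finset.mul_sum]
    refine Finset.sum_le_sum fun i _ => ?_
    calc w i j₀ * h i ≤ |w i j₀ * h i| := le_abs_self _
      _ = |w i j₀| * |h i| := abs_mul _ _
      _ ≤ c * |h i| :=
          mul_le_mul_of_nonneg_right
            ((Complex.abs_re_le_norm _).trans (hc i j₀)) (abs_nonneg _)
  set δ : Fin M → ℝ := fun i => if 0 ≤ h i then 1 else -1 with hδdef
  have h7 : ∑ i, |h i| = ∑ i, δ i * h i := by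
    refine Finset.sum_congr rfl fun i _ => ?_
    by_cases hi : 0 ≤ h i
    · rw [abs_of_nonneg hi, hδdef]
      simp [hi]
    · rw [abs_of_neg (lt_of_not_ge hi), hδdef]
      simp [hi]
  have hT : ∀ S : Finset (Fin M), |∑ i ∈ S, h i| ≤ 2 * D := by
    intro S
    have e1 : ∑ i ∈ S, h i = ∑ k, ε k * (∑ i ∈ S, w i k) := by
      calc ∑ i ∈ S, h i = ∑ i ∈ S, ∑ k, ε k * w i k := rfl
        _ = ∑ k, ∑ i ∈ S, ε k * w i k := Finset.sum_comm
        _ = ∑ k, ε k * (∑ i ∈ S, w i k) := by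
            exact Finset.sum_congr rfl fun k _ => (Finset.mul_sum _ _ _).symm
    have e2 : ∑ k, ε k * (∑ i ∈ S, w i k)
        = (∑ k ∈ Finset.univ.filter (fun k => 0 ≤ ∑ i, w i j₀ * w i k),
            (∑ i ∈ S, w i k))
          - ∑ k ∈ Finset.univ.filter (fun k => ¬ (0 ≤ ∑ i, w i j₀ * w i k)),
            (∑ i ∈ S, w i k) := by
      rw [← Finset.sum_filter_add_sum_filter_not Finset.univ
        (fun k => 0 ≤ ∑ i, w i j₀ * w i k) (fun k => ε k * (∑ i ∈ S, w i k))]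
      rw [sub_eq_add_neg, ← Finset.sum_neg_distrib]
      congr 1
      · refine Finset.sum_congr rfl fun k hk => ?_
        have := (Finset.mem_filter.1 hk).2
        rw [hεdef]
        simp [this]
      · refine Finset.sum_congr rfl fun k hk => ?_
        have := (Finset.mem_filter.1 hk).2
        rw [hεdef]
        simp [this]
    have e3 : ∀ T : Finset (Fin N), |∑ k ∈ T, ∑ i ∈ S, w i k| ≤ D := by
      intro T
      have := hD S T
      rwa [Finset.sum_comm] at this
    rw [e1, e2]
    calc |(∑ k ∈ Finset.univ.filter (fun k => 0 ≤ ∑ i, w i j₀ * w i k),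
            (∑ i ∈ S, w i k))
          - ∑ k ∈ Finset.univ.filter (fun k => ¬ (0 ≤ ∑ i, w i j₀ * w i k)),
            (∑ i ∈ S, w i k)|
        ≤ |∑ k ∈ Finset.univ.filter (fun k => 0 ≤ ∑ i, w i j₀ * w i k),
            (∑ i ∈ S, w i k)|
          + |∑ k ∈ Finset.univ.filter (fun k => ¬ (0 ≤ ∑ i, w i j₀ * w i k)),
            (∑ i ∈ S, w i k)| := abs_sub _ _
      _ ≤ D + D := add_le_add (e3 _) (e3 _)
      _ = 2 * D := by ring
  have h8 : ∑ i, δ i * h i ≤ 4 * D := by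
    rw [← Finset.sum_filter_add_sum_filter_not Finset.univ (fun i => 0 ≤ h i)
      (fun i => δ i * h i)]
    have e4 : ∑ i ∈ Finset.univ.filter (fun i => 0 ≤ h i), δ i * h i
        = ∑ i ∈ Finset.univ.filter (fun i => 0 ≤ h i), h i := by
      refine Finset.sum_congr rfl fun i hi => ?_
      have := (Finset.mem_filter.1 hi).2
      rw [hδdef]
      simp [this]
    have e5 : ∑ i ∈ Finset.univ.filter (fun i => ¬ (0 ≤ h i)), δ i * h i
        = - ∑ i ∈ Finset.univ.filter (fun i => ¬ (0 ≤ h i)), h i := by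
      rw [← Finset.sum_neg_distrib]
      refine Finset.sum_congr rfl fun i hi => ?_
      have := (Finset.mem_filter.1 hi).2
      rw [hδdef]
      simp [this]
    rw [e4, e5]
    have e6 := hT (Finset.univ.filter (fun i => 0 ≤ h i))
    have e7 := hT (Finset.univ.filter (fun i => ¬ (0 ≤ h i)))
    have e8 := abs_le.1 e6
    have e9 := abs_le.1 e7
    linarith
  have h9 : c * ∑ i, |h i| ≤ c * (4 * D) := by
    rw [h7]
    exact mul_le_mul_of_nonneg_left h8 hc0
  calc μ ≤ ∑ k, ‖(Wᴴ * W) j₀ k‖ := h3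
    _ = ∑ i, w i j₀ * h i := by rw [h4, h5]
    _ ≤ c * ∑ i, |h i| := h6
    _ ≤ c * (4 * D) := h9
    _ = 4 * c * D := by ring

/-! ### assembly lemmas -/

lemma sqrt_nrm2_add_le (u v : Fin N → ℂ) :
    Real.sqrt (nrm2 (u + v)) ≤ Real.sqrt (nrm2 u) + Real.sqrt (nrm2 v) := by
  rw [sqrt_nrm2_eq_norm, sqrt_nrm2_eq_norm, sqrt_nrm2_eq_norm]
  exact norm_add_le (WithLp.toLp 2 u : EuclideanSpace ℂ (Fin N)) (WithLp.toLp 2 v)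

lemma sv_blowup {m n : ℕ} (A : Matrix (Fin m) (Fin n) ℂ) (p q : ℕ) (hq : 0 < q)
    (j : ℕ) (hj : j < n) (hj' : j < n * q) :
    sv (blowupR A p q) ⟨j, hj'⟩ = Real.sqrt ((p : ℝ) * (q : ℝ)) * sv A ⟨j, hj⟩ := by
  unfold sv
  rw [le_antisymm (mu_blowup_le A p q hq j hj hj') (mu_blowup_ge A p q hq j hj hj')]
  rw [show ((p : ℝ) * (q : ℝ)
      * sortDesc (Matrix.isHermitian_conjTranspose_mul_self A).eigenvalues ⟨j, hj⟩)
    = ((p : ℝ) * (q : ℝ))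
      * sortDesc (Matrix.isHermitian_conjTranspose_mul_self A).eigenvalues ⟨j, hj⟩ from rfl]
  rw [Real.sqrt_mul (by positivity)]

lemma cutNorm_nonneg (Z : Matrix (Fin M) (Fin N) ℂ) : 0 ≤ cutNorm Z := by
  have h := Finset.le_sup'
    (fun p : Finset (Fin M) × Finset (Fin N) =>
      ‖∑ i ∈ p.1, ∑ j ∈ p.2, Z i j‖ / (M * N))
    (Finset.mem_univ ((∅ : Finset (Fin M)), (∅ : Finset (Fin N))))
  exact le_trans (by simp) h

lemma abs_cutsum_le (Z : Matrix (Fin M) (Fin N) ℂ) (hM : 0 < M) (hN : 0 < N)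
    (S : Finset (Fin M)) (T : Finset (Fin N)) :
    ‖∑ i ∈ S, ∑ j ∈ T, Z i j‖ ≤ (M * N : ℝ) * cutNorm Z := by
  have h := Finset.le_sup'
    (fun p : Finset (Fin M) × Finset (Fin N) =>
      ‖∑ i ∈ p.1, ∑ j ∈ p.2, Z i j‖ / (M * N))
    (Finset.mem_univ (S, T))
  have h2 : ‖∑ i ∈ S, ∑ j ∈ T, Z i j‖ / (M * N : ℝ) ≤ cutNorm Z := h
  have h3 : (0 : ℝ) < (M * N : ℝ) := by positivity
  calc ‖∑ i ∈ S, ∑ j ∈ T, Z i j‖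
      = ‖∑ i ∈ S, ∑ j ∈ T, Z i j‖ / (M * N : ℝ) * (M * N : ℝ) := by
        field_simp
    _ ≤ cutNorm Z * (M * N : ℝ) := mul_le_mul_of_nonneg_right h2 (le_of_lt h3)
    _ = (M * N : ℝ) * cutNorm Z := by ring

lemma abs_entry_le_supAbs (A : Matrix (Fin M) (Fin N) ℂ) (i : Fin M) (j : Fin N) :
    ‖A i j‖ ≤ supAbs A := by
  have h1 : ‖A i j‖ ≤ ⨆ j', ‖A i j'‖ :=
    le_ciSup (f := fun j' => ‖A i j'‖)
      (Set.Finite.bddAbove (Set.finite_range _)) j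
  have h2 : (⨆ j', ‖A i j'‖) ≤ supAbs A :=
    le_ciSup (f := fun i' => ⨆ j', ‖A i' j'‖)
      (Set.Finite.bddAbove (Set.finite_range _)) i
  exact h1.trans h2

lemma sv0_cut (Z : Matrix (Fin M) (Fin N) ℂ) (hM : 0 < M) (hN : 0 < N)
    (hent : ∀ i j, ‖Z i j‖ ≤ 2) :
    sv Z ⟨0, hN⟩ ≤ 2 * Real.sqrt (8 * ((M * N : ℝ) * cutNorm Z)) := by
  classical
  set D : ℝ := (M * N : ℝ) * cutNorm Z with hDdef
  have hD0 : 0 ≤ D := mul_nonneg (by positivity) (cutNorm_nonneg Z)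
  have habs : ∀ (S : Finset (Fin M)) (T : Finset (Fin N)),
      ‖∑ i ∈ S, ∑ j ∈ T, Z i j‖ ≤ D := fun S T => abs_cutsum_le Z hM hN S T
  set R : Matrix (Fin M) (Fin N) ℂ := Matrix.of (fun i j => ((Z i j).re : ℂ)) with hRdef
  set S' : Matrix (Fin M) (Fin N) ℂ := Matrix.of (fun i j => ((Z i j).im : ℂ)) with hSdef
  have hZRS : Z = R + Complex.I • S' := by
    ext i j
    simp only [Matrix.add_apply, Matrix.smul_apply, hRdef, hSdef, Matrix.of_apply,
      smul_eq_mul]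
    rw [mul_comm]
    exact (Complex.re_add_im (Z i j)).symm
  have hμR : sortDesc (Matrix.isHermitian_conjTranspose_mul_self R).eigenvalues ⟨0, hN⟩
      ≤ 4 * 2 * D := by
    refine mu0_real_le R hN 2 D (by norm_num) ?_ ?_ ?_
    · intro i j; simp [hRdef]
    · intro i j
      simp only [hRdef, Matrix.of_apply, Complex.norm_real, Real.norm_eq_abs]
      exact (Complex.abs_re_le_norm _).trans (hent i j)
    · intro S T
      have h1 : ∑ i ∈ S, ∑ j ∈ T, (R i j).re
          = (∑ i ∈ S, ∑ j ∈ T, Z i j).re := by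
        rw [Complex.re_sum]
        refine Finset.sum_congr rfl fun i _ => ?_
        rw [Complex.re_sum]
        exact Finset.sum_congr rfl fun j _ => by simp [hRdef]
      rw [h1]
      exact (Complex.abs_re_le_norm _).trans (habs S T)
  have hμS : sortDesc (Matrix.isHermitian_conjTranspose_mul_self S').eigenvalues ⟨0, hN⟩
      ≤ 4 * 2 * D := by
    refine mu0_real_le S' hN 2 D (by norm_num) ?_ ?_ ?_
    · intro i j; simp [hSdef]
    · intro i j
      simp only [hSdef, Matrix.of_apply, Complex.norm_real, Real.norm_eq_abs]
      exact (Complex.abs_im_le_norm _).trans (hent i j)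
    · intro S T
      have h1 : ∑ i ∈ S, ∑ j ∈ T, (S' i j).re
          = (∑ i ∈ S, ∑ j ∈ T, Z i j).im := by
        rw [Complex.im_sum]
        refine Finset.sum_congr rfl fun i _ => ?_
        rw [Complex.im_sum]
        exact Finset.sum_congr rfl fun j _ => by simp [hSdef]
      rw [h1]
      exact (Complex.abs_im_le_norm _).trans (habs S T)
  have hsvR : sv R ⟨0, hN⟩ ≤ Real.sqrt (8 * D) := by
    unfold sv
    refine Real.sqrt_le_sqrt ?_
    linarith
  have hsvS : sv S' ⟨0, hN⟩ ≤ Real.sqrt (8 * D) := by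
    unfold sv
    refine Real.sqrt_le_sqrt ?_
    linarith
  obtain ⟨v, hv1, hveq⟩ :=
    exists_top_eigvec (Matrix.isHermitian_conjTranspose_mul_self Z) hN
  have h1 : sv Z ⟨0, hN⟩ = Real.sqrt (nrm2 (Z *ᵥ v)) := by
    have h2 : nrm2 (Z *ᵥ v) = qf (Zᴴ * Z) v := (qf_gram Z v).symm
    have h3 : qf (Zᴴ * Z) v
        = sortDesc (Matrix.isHermitian_conjTranspose_mul_self Z).eigenvalues ⟨0, hN⟩ := by
      rw [qf, hveq, dotProduct_smul, smul_eq_mul, dot_self_eq_nrm2, hv1]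
      simp
    rw [h2, h3]
    rfl
  rw [h1]
  have h4 : Z *ᵥ v = R *ᵥ v + Complex.I • (S' *ᵥ v) := by
    rw [hZRS, Matrix.add_mulVec, Matrix.smul_mulVec]
  calc Real.sqrt (nrm2 (Z *ᵥ v))
      = Real.sqrt (nrm2 (R *ᵥ v + Complex.I • (S' *ᵥ v))) := by rw [h4]
    _ ≤ Real.sqrt (nrm2 (R *ᵥ v)) + Real.sqrt (nrm2 (Complex.I • (S' *ᵥ v))) :=
        sqrt_nrm2_add_le _ _
    _ = Real.sqrt (nrm2 (R *ᵥ v)) + Real.sqrt (nrm2 (S' *ᵥ v)) := by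
        rw [nrm2_smul, Complex.normSq_I, one_mul]
    _ ≤ sv R ⟨0, hN⟩ * Real.sqrt (nrm2 v) + sv S' ⟨0, hN⟩ * Real.sqrt (nrm2 v) :=
        add_le_add (sqrt_nrm2_mulVec_le R hN v) (sqrt_nrm2_mulVec_le S' hN v)
    _ = sv R ⟨0, hN⟩ + sv S' ⟨0, hN⟩ := by
        rw [hv1, Real.sqrt_one, mul_one, mul_one]
    _ ≤ Real.sqrt (8 * D) + Real.sqrt (8 * D) := add_le_add hsvR hsvS
    _ = 2 * Real.sqrt (8 * D) := by ring

lemma key_pair (X Y : Matrix (Fin M) (Fin N) ℂ) (hM : 0 < M) (hN : 0 < N)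
    (hX : ∀ i j, ‖X i j‖ ≤ 1) (hY : ∀ i j, ‖Y i j‖ ≤ 1)
    (j : ℕ) (hj : j < N) :
    |sv X ⟨j, hj⟩ - sv Y ⟨j, hj⟩|
      ≤ 2 * Real.sqrt (8 * ((M * N : ℝ) * cutNorm (X - Y))) := by
  have hent : ∀ i k, ‖(X - Y) i k‖ ≤ 2 := by
    intro i k
    have h1 : ‖X i k - Y i k‖ ≤ ‖X i k‖ + ‖Y i k‖ := by
      have h0 := norm_sub_le (X i k) (Y i k)
      simpa using h0
    have h2 := hX i k
    have h3 := hY i k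
    calc ‖(X - Y) i k‖ = ‖X i k - Y i k‖ := rfl
      _ ≤ ‖X i k‖ + ‖Y i k‖ := h1
      _ ≤ 2 := by linarith
  have h4 := weyl X Y j hj
  have h5 := sv0_cut (X - Y) hM hN hent
  calc |sv X ⟨j, hj⟩ - sv Y ⟨j, hj⟩|
      ≤ sv (X - Y) ⟨0, lt_of_le_of_lt (Nat.zero_le j) hj⟩ := h4
    _ ≤ 2 * Real.sqrt (8 * ((M * N : ℝ) * cutNorm (X - Y))) := h5

lemma le_6sqrt_iInf {α : Type*} [Nonempty α] {f : α → ℝ} {L : ℝ} (hL : 0 ≤ L)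
    (hf0 : ∀ a, 0 ≤ f a) (h : ∀ a, L ≤ 6 * Real.sqrt (f a)) :
    L ≤ 6 * Real.sqrt (⨅ a, f a) := by
  have h1 : ∀ a, (L / 6) ^ 2 ≤ f a := by
    intro a
    have h2 : L / 6 ≤ Real.sqrt (f a) := by linarith [h a]
    calc (L / 6) ^ 2 ≤ Real.sqrt (f a) ^ 2 := by
          exact pow_le_pow_left₀ (by positivity) h2 2
      _ = f a := Real.sq_sqrt (hf0 a)
  have h3 : (L / 6) ^ 2 ≤ ⨅ a, f a := le_ciInf h1
  have h4 : Real.sqrt ((L / 6) ^ 2) ≤ Real.sqrt (⨅ a, f a) := Real.sqrt_le_sqrt h3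
  rw [Real.sqrt_sq (by positivity)] at h4
  linarith

end SVProof

open SVProof in
set_option maxHeartbeats 2000000 in
/-- Let `A` be `m × n` and `B` be `r × s` complex matrices with `|A|_∞ ≤ 1`
and `|B|_∞ ≤ 1`.  Then for every `i = 1, …, min(m,n,r,s)`:
`|σᵢ(A)/√(mn) − σᵢ(B)/√(rs)| ≤ 6 δ_⊟(A,B)^{1/2}`. -/
theorem singVal_cutDist_bound {m n r s : ℕ} (A : Matrix (Fin m) (Fin n) ℂ)
    (B : Matrix (Fin r) (Fin s) ℂ) (hA1 : supAbs A ≤ 1) (hB1 : supAbs B ≤ 1)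
    (i : ℕ) (hi : 1 ≤ i) (him : i ≤ m) (hin : i ≤ n) (hir : i ≤ r) (his : i ≤ s) :
    |singVal A (i - 1) / Real.sqrt (m * n) -
      singVal B (i - 1) / Real.sqrt (r * s)| ≤
      6 * Real.sqrt (cutDistR A B) := by
  classical
  have hm : 0 < m := lt_of_lt_of_le hi him
  have hn : 0 < n := lt_of_lt_of_le hi hin
  have hr : 0 < r := lt_of_lt_of_le hi hir
  have hs : 0 < s := lt_of_lt_of_le hi his
  have hjn : i - 1 < n := by omega
  have hjs : i - 1 < s := by omega
  set j : ℕ := i - 1 with hjdef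
  set L : ℝ := |singVal A j / Real.sqrt (m * n) - singVal B j / Real.sqrt (r * s)|
    with hLdef
  show L ≤ 6 * Real.sqrt (cutDistR A B)
  unfold cutDistR
  apply le_6sqrt_iInf (abs_nonneg _) (fun k => Real.iInf_nonneg fun p => cutNorm_nonneg _)
  intro k
  -- fixed blowup level
  set P : ℕ := (k + 1) * r with hP
  set Q : ℕ := (k + 1) * s with hQ
  set P' : ℕ := (k + 1) * m with hP'
  set Q' : ℕ := (k + 1) * n with hQ'
  have hPpos : 0 < P := by positivity
  have hQpos : 0 < Q := by positivity
  have hP'pos : 0 < P' := by positivity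
  have hQ'pos : 0 < Q' := by positivity
  have hjN : j < n * Q := lt_of_lt_of_le hjn (Nat.le_mul_of_pos_right n hQpos)
  have hjsQ' : j < s * Q' := lt_of_lt_of_le hjs (Nat.le_mul_of_pos_right s hQ'pos)
  set X : Matrix (Fin (m * P)) (Fin (n * Q)) ℂ := blowupR A P Q with hX
  set Y0 : Matrix (Fin (m * P)) (Fin (n * Q)) ℂ :=
    (blowupR B P' Q').submatrix (finCongr (by ring)) (finCongr (by ring)) with hY0
  apply le_6sqrt_iInf (abs_nonneg _) (fun p => cutNorm_nonneg _)
  intro p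
  set Ys : Matrix (Fin (m * P)) (Fin (n * Q)) ℂ := Y0.submatrix ⇑p.1 ⇑p.2 with hYs
  have hMpos : 0 < m * P := by positivity
  have hNpos : 0 < n * Q := by positivity
  -- entry bounds
  have hXent : ∀ a b, ‖X a b‖ ≤ 1 := fun a b =>
    le_trans (abs_entry_le_supAbs A _ _) hA1
  have hYent : ∀ a b, ‖Ys a b‖ ≤ 1 := fun a b =>
    le_trans (abs_entry_le_supAbs B _ _) hB1
  -- singular value identities
  have hXA : sv X ⟨j, hjN⟩ = Real.sqrt ((P : ℝ) * (Q : ℝ)) * sv A ⟨j, hjn⟩ :=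
    sv_blowup A P Q hQpos j hjn hjN
  have hY1 : sv Ys ⟨j, hjN⟩ = sv Y0 ⟨j, hjN⟩ :=
    sv_submatrix Y0 p.1 p.2 j hjN hjN
  have hY2 : sv Y0 ⟨j, hjN⟩ = sv (blowupR B P' Q') ⟨j, hjsQ'⟩ :=
    sv_submatrix (blowupR B P' Q') (finCongr (by ring)) (finCongr (by ring)) j hjsQ' hjN
  have hY3 : sv (blowupR B P' Q') ⟨j, hjsQ'⟩
      = Real.sqrt ((P' : ℝ) * (Q' : ℝ)) * sv B ⟨j, hjs⟩ :=
    sv_blowup B P' Q' hQ'pos j hjs hjsQ'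
  -- Weyl + cut-norm bound
  have hkey := key_pair X Ys hMpos hNpos hXent hYent j hjN
  -- arithmetic
  set a : ℝ := sv A ⟨j, hjn⟩ with ha
  set b : ℝ := sv B ⟨j, hjs⟩ with hb
  set cn : ℝ := cutNorm (X - Ys) with hcn
  have hcn0 : 0 ≤ cn := cutNorm_nonneg _
  set t1 : ℝ := Real.sqrt ((m : ℝ) * (n : ℝ)) with ht1def
  set t2 : ℝ := Real.sqrt ((r : ℝ) * (s : ℝ)) with ht2def
  set u1 : ℝ := Real.sqrt ((P : ℝ) * (Q : ℝ)) with hu1def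
  set u2 : ℝ := Real.sqrt ((P' : ℝ) * (Q' : ℝ)) with hu2def
  set w : ℝ := ((m * P : ℕ) : ℝ) * ((n * Q : ℕ) : ℝ) with hwdef
  have hw0 : 0 ≤ w := by positivity
  have hmn : (0:ℝ) < (m : ℝ) * (n : ℝ) := by
    have h1 : (0:ℝ) < (m:ℝ) := by exact_mod_cast hm
    have h2 : (0:ℝ) < (n:ℝ) := by exact_mod_cast hn
    positivity
  have hrs : (0:ℝ) < (r : ℝ) * (s : ℝ) := by
    have h1 : (0:ℝ) < (r:ℝ) := by exact_mod_cast hr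
    have h2 : (0:ℝ) < (s:ℝ) := by exact_mod_cast hs
    positivity
  have ht1 : 0 < t1 := Real.sqrt_pos.2 hmn
  have ht2 : 0 < t2 := Real.sqrt_pos.2 hrs
  have hw1 : Real.sqrt w = t1 * u1 := by
    rw [hwdef, show ((m * P : ℕ) : ℝ) * ((n * Q : ℕ) : ℝ)
      = ((m : ℝ) * (n : ℝ)) * ((P : ℝ) * (Q : ℝ)) by push_cast; ring]
    rw [Real.sqrt_mul (le_of_lt hmn)]
  have hw2 : Real.sqrt w = t2 * u2 := by
    rw [hwdef, show ((m * P : ℕ) : ℝ) * ((n * Q : ℕ) : ℝ)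
      = ((r : ℝ) * (s : ℝ)) * ((P' : ℝ) * (Q' : ℝ)) by
        rw [hP, hQ, hP', hQ']; push_cast; ring]
    rw [Real.sqrt_mul (le_of_lt hrs)]
  have hwpos : 0 < Real.sqrt w := by
    rw [hw1]
    have hu1pos : 0 < u1 := Real.sqrt_pos.2 (by positivity)
    positivity
  -- L in terms of blown-up singular values
  have hLsq : L * Real.sqrt w = |u1 * a - u2 * b| := by
    have hA' : singVal A j = a := singVal_eq_sv A j hjn
    have hB' : singVal B j = b := singVal_eq_sv B j hjs
    have h12 : t1 * u1 = t2 * u2 := hw1.symm.trans hw2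
    have he : (a / t1 - b / t2) * (t1 * u1) = u1 * a - u2 * b := by
      have e1 : (a / t1) * (t1 * u1) = u1 * a := by
        field_simp
      have e2 : (b / t2) * (t1 * u1) = u2 * b := by
        rw [h12]
        field_simp
      calc (a / t1 - b / t2) * (t1 * u1)
          = (a / t1) * (t1 * u1) - (b / t2) * (t1 * u1) := by ring
        _ = u1 * a - u2 * b := by rw [e1, e2]
    rw [hLdef, hA', hB', hw1]
    rw [show |a / t1 - b / t2| * (t1 * u1) = |a / t1 - b / t2| * |t1 * u1| by
      rw [abs_of_nonneg (by positivity : (0:ℝ) ≤ t1 * u1)]]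
    rw [← abs_mul, he]
  -- conclude
  have hkey2 : |u1 * a - u2 * b| ≤ 2 * (Real.sqrt w * Real.sqrt (8 * cn)) := by
    have h8 : Real.sqrt (8 * (w * cn)) = Real.sqrt w * Real.sqrt (8 * cn) := by
      rw [show 8 * (w * cn) = w * (8 * cn) by ring, Real.sqrt_mul hw0]
    calc |u1 * a - u2 * b| = |sv X ⟨j, hjN⟩ - sv Ys ⟨j, hjN⟩| := by
          rw [hXA, hY1, hY2, hY3, ha, hb, hu1def, hu2def]
      _ ≤ 2 * Real.sqrt (8 * (w * cn)) := hkey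
      _ = 2 * (Real.sqrt w * Real.sqrt (8 * cn)) := by rw [h8]
  have hL2 : L ≤ 2 * Real.sqrt (8 * cn) := by
    have h1 : L * Real.sqrt w ≤ (2 * Real.sqrt (8 * cn)) * Real.sqrt w := by
      rw [hLsq]
      calc |u1 * a - u2 * b| ≤ 2 * (Real.sqrt w * Real.sqrt (8 * cn)) := hkey2
        _ = (2 * Real.sqrt (8 * cn)) * Real.sqrt w := by ring
    exact le_of_mul_le_mul_right h1 hwpos
  have h9 : (2 : ℝ) * Real.sqrt (8 * cn) ≤ 6 * Real.sqrt cn := by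
    rw [Real.sqrt_mul (by norm_num : (0:ℝ) ≤ 8)]
    have h10 : Real.sqrt 8 ≤ 3 := by
      have h11 : Real.sqrt 8 ≤ Real.sqrt 9 := Real.sqrt_le_sqrt (by norm_num)
      have h12 : Real.sqrt 9 = 3 := by
        rw [show (9:ℝ) = 3 ^ 2 by norm_num, Real.sqrt_sq (by norm_num)]
      linarith
    have h13 : 0 ≤ Real.sqrt cn := Real.sqrt_nonneg _
    nlinarith
  exact hL2.trans h9
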